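/- arXiv:2404.14226 — 3 statements merged into one kernel-verified Lean document; each statement's English description precedes it below -/
import Mathlib

section
/- Fix an integer k ≥ 2, an integer m ≥ 0, and constants C_F, c₁, c₂ > 0. There exists a constant C > 0, depending only on k, m, C_F, c₁, c₂, such that for every h ∈ (0,1] and every map F : ℝ² → ℝ² whose two components are polynomials of total degree ≤ k, which is injective on the closure of T̂ and satisfies |F|_{W^{r,∞}(T̂)} ≤ C_F h^r for 0 ≤ r ≤ k and c₁h² ≤ det DF(x) ≤ c₂h² for all x in the closure of T̂, the matrix-valued map A(x) := DF(x)/det DF(x) satisfies |A|_{W^{m,∞}(T̂)} ≤ C h^{m−1}. -/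
open Set MeasureTheory Function

noncomputable section

/-- The open reference triangle with vertices (0,0), (1,0), (0,1). -/
def Tref : Set (ℝ × ℝ) := {x | 0 < x.1 ∧ 0 < x.2 ∧ x.1 + x.2 < 1}

/-- The three vertices of the reference triangle. -/
def vtx : Fin 3 → ℝ × ℝ := ![(0, 0), (1, 0), (0, 1)]

/-- The (open) Clough–Tocher subtriangles, obtained by connecting the barycenter
to the vertices. -/
def ctK (i : Fin 3) : Set (ℝ × ℝ) :=
  interior (convexHull ℝ {vtx i, vtx (i + 1), ((1 : ℝ) / 3, (1 : ℝ) / 3)})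

/-- A map `ℝ² → ℝ²` whose two components are polynomials of total degree ≤ k. -/
def IsPolyMap (k : ℕ) (F : ℝ × ℝ → ℝ × ℝ) : Prop :=
  ∃ P Q : MvPolynomial (Fin 2) ℝ, P.totalDegree ≤ k ∧ Q.totalDegree ≤ k ∧
    ∀ x : ℝ × ℝ,
      F x = (MvPolynomial.eval ![x.1, x.2] P, MvPolynomial.eval ![x.1, x.2] Q)

/-- The Jacobian determinant of `F`. -/
def jacDet (F : ℝ × ℝ → ℝ × ℝ) (x : ℝ × ℝ) : ℝ :=
  LinearMap.det ((fderiv ℝ F x) : (ℝ × ℝ) →ₗ[ℝ] (ℝ × ℝ))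

/-- The Piola matrix `A(x) = DF(x) / det DF(x)`. -/
def Amap (F : ℝ × ℝ → ℝ × ℝ) (x : ℝ × ℝ) : (ℝ × ℝ) →L[ℝ] (ℝ × ℝ) :=
  (jacDet F x)⁻¹ • fderiv ℝ F x

/-- `B(x) = det DF(x) · (DF(x))⁻¹`, the adjugate of `DF`. -/
def Bmap (F : ℝ × ℝ → ℝ × ℝ) (x : ℝ × ℝ) : (ℝ × ℝ) →L[ℝ] (ℝ × ℝ) :=
  jacDet F x • Ring.inverse (fderiv ℝ F x)

/-- `v` is the Piola transform of `v̂` under `F`. -/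
def IsPiola (F vh v : ℝ × ℝ → ℝ × ℝ) : Prop :=
  ∀ x ∈ closure Tref, v (F x) = Amap F x (vh x)

/-- The `W^{m,p}` seminorm over a set `S` (for `p < ∞`). -/
def semiLp {E : Type*} [NormedAddCommGroup E] [NormedSpace ℝ E]
    (m : ℕ) (p : ℝ) (w : ℝ × ℝ → E) (S : Set (ℝ × ℝ)) : ℝ :=
  (∫ x in S, ‖iteratedFDeriv ℝ m w x‖ ^ p) ^ (1 / p)

/-- The `W^{m,p}` norm over a set `S`: the sum of the seminorms up to order `m`. -/
def normWmp {E : Type*} [NormedAddCommGroup E] [NormedSpace ℝ E]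
    (m : ℕ) (p : ℝ) (w : ℝ × ℝ → E) (S : Set (ℝ × ℝ)) : ℝ :=
  ∑ j ∈ Finset.range (m + 1), semiLp j p w S

/-- The isoparametric bounds of order `k` with constants `CF, c₁, c₂` and parameter `h`. -/
def IsoparamBounds (k : ℕ) (CF c₁ c₂ h : ℝ) (F : ℝ × ℝ → ℝ × ℝ) : Prop :=
  InjOn F (closure Tref) ∧
  (∀ m : ℕ, m ≤ k → ∀ x ∈ Tref, ‖iteratedFDeriv ℝ m F x‖ ≤ CF * h ^ m) ∧
  (∀ m : ℕ, m ≤ k + 1 → ∀ y ∈ F '' Tref,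
    ‖iteratedFDeriv ℝ m (invFunOn F (closure Tref)) y‖ ≤ CF * h ^ (-(m : ℤ))) ∧
  (∀ x ∈ closure Tref, c₁ * h ^ 2 ≤ jacDet F x ∧ jacDet F x ≤ c₂ * h ^ 2)

/-- The (planar) divergence of a vector field. -/
def pdiv (w : ℝ × ℝ → ℝ × ℝ) (x : ℝ × ℝ) : ℝ :=
  (fderiv ℝ w x (1, 0)).1 + (fderiv ℝ w x (0, 1)).2



section Aux
open ContinuousLinearMap

theorem isOpen_Tref : IsOpen Tref :=
  (isOpen_lt continuous_const continuous_fst).inter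
    ((isOpen_lt continuous_const continuous_snd).inter
      (isOpen_lt (continuous_fst.add continuous_snd) continuous_const))

def mono (a b : ℕ) : ℝ × ℝ → ℝ := fun p => p.1 ^ a * p.2 ^ b

theorem contDiff_mono (n : WithTop ℕ∞) (a b : ℕ) : ContDiff ℝ n (mono a b) :=
  (contDiff_fst.pow a).mul (contDiff_snd.pow b)

theorem hasFDerivAt_mono (a b : ℕ) (x : ℝ × ℝ) :
    HasFDerivAt (mono a b)
      ((((a : ℝ) * mono (a - 1) b x) • fst ℝ ℝ ℝ)
        + (((b : ℝ) * mono a (b - 1) x) • snd ℝ ℝ ℝ)) x := by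
  have h1 : HasFDerivAt (fun p : ℝ × ℝ => p.1 ^ a) (((a : ℝ) * x.1 ^ (a - 1)) • fst ℝ ℝ ℝ) x :=
    (hasDerivAt_pow a x.1).comp_hasFDerivAt x hasFDerivAt_fst
  have h2 : HasFDerivAt (fun p : ℝ × ℝ => p.2 ^ b) (((b : ℝ) * x.2 ^ (b - 1)) • snd ℝ ℝ ℝ) x :=
    (hasDerivAt_pow b x.2).comp_hasFDerivAt x hasFDerivAt_snd
  have h := h1.mul h2
  refine h.congr_fderiv ?_
  rw [smul_smul, smul_smul, add_comm]
  congr 1 <;> · unfold mono; ring_nf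

theorem zero_term (r : ℕ) (c : ℝ) (a b : ℕ) (L : (ℝ × ℝ) →L[ℝ] ℝ)
    (hz : c = 0 ∨ ∀ y, iteratedFDeriv ℝ r (mono a b) y = 0) (x : ℝ × ℝ) :
    iteratedFDeriv ℝ r (fun y => (c * mono a b y) • L) x = 0 := by
  have hrepr : (fun y => (c * mono a b y) • L)
      = (ContinuousLinearMap.toSpanSingleton ℝ L) ∘ (fun y => c • mono a b y) := by
    funext y
    simp [ContinuousLinearMap.toSpanSingleton_apply, smul_eq_mul]
  rw [hrepr, ContinuousLinearMap.iteratedFDeriv_comp_left _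
    ((contDiff_mono r a b).const_smul c).contDiffAt le_rfl]
  rw [iteratedFDeriv_const_smul_apply' (contDiff_mono r a b).contDiffAt]
  rcases hz with hz | hz
  · subst hz; simp
    ext1 mm
    simp
  · rw [hz x]
    simp
    ext1 mm
    simp

theorem iteratedFDeriv_mono_zero : ∀ r a b : ℕ, a + b < r → ∀ x : ℝ × ℝ,
    iteratedFDeriv ℝ r (mono a b) x = 0 := by
  intro r
  induction r with
  | zero => omega
  | succ r IH =>
    intro a b hab x
    rw [iteratedFDeriv_succ_eq_comp_right]
    have hfd : fderiv ℝ (mono a b) = fun y =>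
        ((((a : ℝ) * mono (a - 1) b y) • fst ℝ ℝ ℝ)
          + (((b : ℝ) * mono a (b - 1) y) • snd ℝ ℝ ℝ)) :=
      funext fun y => (hasFDerivAt_mono a b y).fderiv
    have hzero : iteratedFDeriv ℝ r (fderiv ℝ (mono a b)) x = 0 := by
      rw [hfd]
      have c1 : ContDiff ℝ (r : WithTop ℕ∞) fun y => ((a : ℝ) * mono (a - 1) b y) • fst ℝ ℝ ℝ :=
        (((contDiff_const (c := (a:ℝ))).mul (contDiff_mono r (a-1) b)).smul contDiff_const)
      have c2 : ContDiff ℝ (r : WithTop ℕ∞) fun y => ((b : ℝ) * mono a (b - 1) y) • snd ℝ ℝ ℝ :=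
        (((contDiff_const (c := (b:ℝ))).mul (contDiff_mono r a (b-1))).smul contDiff_const)
      rw [iteratedFDeriv_add_apply' c1.contDiffAt c2.contDiffAt]
      rw [zero_term r _ _ _ _ ?_ x, zero_term r _ _ _ _ ?_ x, add_zero]
      · rcases Nat.eq_zero_or_pos b with hb | hb
        · exact Or.inl (by simp [hb])
        · exact Or.inr (fun y => IH a (b-1) (by omega) y)
      · rcases Nat.eq_zero_or_pos a with ha | ha
        · exact Or.inl (by simp [ha])
        · exact Or.inr (fun y => IH (a-1) b (by omega) y)
    rw [Function.comp_apply, hzero]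
    simp
    exact LinearIsometryEquiv.map_zero _
def evalP (p : MvPolynomial (Fin 2) ℝ) : ℝ × ℝ → ℝ :=
  fun x => MvPolynomial.eval ![x.1, x.2] p

theorem evalP_eq (p : MvPolynomial (Fin 2) ℝ) :
    evalP p = fun x => ∑ d ∈ p.support, MvPolynomial.coeff d p * mono (d 0) (d 1) x := by
  funext x
  simp only [evalP, MvPolynomial.eval_eq', mono, Fin.prod_univ_two,
    Matrix.cons_val_zero, Matrix.cons_val_one, Matrix.head_cons]

theorem contDiff_evalP (n : WithTop ℕ∞) (p : MvPolynomial (Fin 2) ℝ) :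
    ContDiff ℝ n (evalP p) := by
  rw [evalP_eq]
  exact ContDiff.sum fun d _ => contDiff_const.mul (contDiff_mono n _ _)

theorem iteratedFDeriv_evalP_zero (p : MvPolynomial (Fin 2) ℝ) (r : ℕ)
    (hr : p.totalDegree < r) (x : ℝ × ℝ) : iteratedFDeriv ℝ r (evalP p) x = 0 := by
  rw [evalP_eq]
  rw [iteratedFDeriv_sum (fun d _ => contDiff_const.mul (contDiff_mono r _ _))]
  rw [Finset.sum_apply]
  refine Finset.sum_eq_zero fun d hd => ?_
  have hdeg : d 0 + d 1 < r := by
    have h1 := MvPolynomial.le_totalDegree hd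
    have h2 : (Finsupp.sum d fun _ e => e) = d 0 + d 1 := by
      rw [Finsupp.sum_fintype _ _ (fun _ => rfl), Fin.sum_univ_two]
    omega
  have : (fun y => MvPolynomial.coeff d p * mono (d 0) (d 1) y)
      = fun y => MvPolynomial.coeff d p • mono (d 0) (d 1) y := by
    funext y; rw [smul_eq_mul]
  rw [this, iteratedFDeriv_const_smul_apply' (contDiff_mono r _ _).contDiffAt,
    iteratedFDeriv_mono_zero r _ _ hdeg x, smul_zero]

theorem IsPolyMap.repr {k F} (hF : IsPolyMap k F) :
    ∃ P Q : MvPolynomial (Fin 2) ℝ, P.totalDegree ≤ k ∧ Q.totalDegree ≤ k ∧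
      F = (fun x => (inl ℝ ℝ ℝ) (evalP P x)) + (fun x => (inr ℝ ℝ ℝ) (evalP Q x)) := by
  obtain ⟨P, Q, hP, hQ, hFx⟩ := hF
  exact ⟨P, Q, hP, hQ, funext fun x => by
    simp [hFx x, evalP, Prod.ext_iff]⟩

theorem IsPolyMap.contDiff {k F} (hF : IsPolyMap k F) (n : WithTop ℕ∞) : ContDiff ℝ n F := by
  obtain ⟨P, Q, _, _, rfl⟩ := hF.repr
  exact (((inl ℝ ℝ ℝ).contDiff).comp (contDiff_evalP n P)).add
    (((inr ℝ ℝ ℝ).contDiff).comp (contDiff_evalP n Q))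

theorem IsPolyMap.iteratedFDeriv_zero {k F} (hF : IsPolyMap k F) {r : ℕ} (hr : k < r)
    (x : ℝ × ℝ) : iteratedFDeriv ℝ r F x = 0 := by
  obtain ⟨P, Q, hP, hQ, rfl⟩ := hF.repr
  have c1 : ContDiff ℝ (r : WithTop ℕ∞) (fun x => (inl ℝ ℝ ℝ) (evalP P x)) :=
    ((inl ℝ ℝ ℝ).contDiff).comp (contDiff_evalP r P)
  have c2 : ContDiff ℝ (r : WithTop ℕ∞) (fun x => (inr ℝ ℝ ℝ) (evalP Q x)) :=
    ((inr ℝ ℝ ℝ).contDiff).comp (contDiff_evalP r Q)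
  rw [iteratedFDeriv_add_apply c1.contDiffAt c2.contDiffAt]
  have e1 : iteratedFDeriv ℝ r (fun x => (inl ℝ ℝ ℝ) (evalP P x)) x
      = (inl ℝ ℝ ℝ).compContinuousMultilinearMap (iteratedFDeriv ℝ r (evalP P) x) :=
    (inl ℝ ℝ ℝ).iteratedFDeriv_comp_left (contDiff_evalP r P).contDiffAt le_rfl
  have e2 : iteratedFDeriv ℝ r (fun x => (inr ℝ ℝ ℝ) (evalP Q x)) x
      = (inr ℝ ℝ ℝ).compContinuousMultilinearMap (iteratedFDeriv ℝ r (evalP Q) x) :=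
    (inr ℝ ℝ ℝ).iteratedFDeriv_comp_left (contDiff_evalP r Q).contDiffAt le_rfl
  rw [e1, e2, iteratedFDeriv_evalP_zero P r (by omega) x,
    iteratedFDeriv_evalP_zero Q r (by omega) x]
  ext mm <;> simp


theorem det_clm (L : (ℝ × ℝ) →L[ℝ] (ℝ × ℝ)) :
    LinearMap.det (L : (ℝ × ℝ) →ₗ[ℝ] (ℝ × ℝ))
      = (L (1, 0)).1 * (L (0, 1)).2 - (L (1, 0)).2 * (L (0, 1)).1 := by
  rw [← LinearMap.det_toMatrix (Module.Basis.finTwoProd ℝ), Matrix.det_fin_two]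
  simp [LinearMap.toMatrix_apply, Module.Basis.finTwoProd_zero, Module.Basis.finTwoProd_one,
    Module.Basis.coe_finTwoProd_repr]
  ring

def eC (v : ℝ × ℝ) (i : Bool) : ((ℝ × ℝ) →L[ℝ] (ℝ × ℝ)) →L[ℝ] ℝ :=
  (if i then fst ℝ ℝ ℝ else snd ℝ ℝ ℝ).comp (ContinuousLinearMap.apply ℝ (ℝ × ℝ) v)

theorem eC_apply (v : ℝ × ℝ) (i : Bool) (L : (ℝ × ℝ) →L[ℝ] (ℝ × ℝ)) :
    eC v i L = if i then (L v).1 else (L v).2 := by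
  rcases i with _ | _ <;> simp [eC]

theorem norm_eC_le (v : ℝ × ℝ) (hv : ‖v‖ ≤ 1) (i : Bool) : ‖eC v i‖ ≤ 1 := by
  refine opNorm_le_bound _ zero_le_one fun L => ?_
  rw [eC_apply, one_mul]
  have h2 : ‖L v‖ ≤ ‖L‖ := by
    calc ‖L v‖ ≤ ‖L‖ * ‖v‖ := L.le_opNorm v
    _ ≤ ‖L‖ * 1 := by gcongr
    _ = ‖L‖ := mul_one _
  rcases i with _ | _
  · simp only [if_neg Bool.false_ne_true]
    exact le_trans (norm_snd_le _) h2
  · simp only [if_pos rfl]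
    exact le_trans (norm_fst_le _) h2

theorem jacDet_eq (F : ℝ × ℝ → ℝ × ℝ) : jacDet F = fun x =>
    eC (1, 0) true (fderiv ℝ F x) * eC (0, 1) false (fderiv ℝ F x)
      - eC (1, 0) false (fderiv ℝ F x) * eC (0, 1) true (fderiv ℝ F x) := by
  funext x
  rw [jacDet, det_clm]
  simp [eC_apply]

theorem comp_eC_bound (v : ℝ × ℝ) (hv : ‖v‖ ≤ 1) (i : Bool)
    {f : ℝ × ℝ → ((ℝ × ℝ) →L[ℝ] (ℝ × ℝ))} (hf : ContDiff ℝ ⊤ f) (j : ℕ) (x : ℝ × ℝ) :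
    ‖iteratedFDeriv ℝ j (fun y => eC v i (f y)) x‖ ≤ ‖iteratedFDeriv ℝ j f x‖ := by
  have hc : iteratedFDeriv ℝ j (fun y => eC v i (f y)) x
      = (eC v i).compContinuousMultilinearMap (iteratedFDeriv ℝ j f x) :=
    (eC v i).iteratedFDeriv_comp_left hf.contDiffAt le_top
  rw [hc]
  calc ‖(eC v i).compContinuousMultilinearMap (iteratedFDeriv ℝ j f x)‖
      ≤ ‖eC v i‖ * ‖iteratedFDeriv ℝ j f x‖ :=
        (eC v i).norm_compContinuousMultilinearMap_le _
    _ ≤ 1 * ‖iteratedFDeriv ℝ j f x‖ := by gcongr; exact norm_eC_le v hv i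
    _ = _ := one_mul _

theorem norm_v10 : ‖((1 : ℝ), (0 : ℝ))‖ ≤ 1 := by simp [Prod.norm_def]
theorem norm_v01 : ‖((0 : ℝ), (1 : ℝ))‖ ≤ 1 := by simp [Prod.norm_def]

theorem jacDet_bound {F : ℝ × ℝ → ℝ × ℝ} (hF : ∀ n : WithTop ℕ∞, ContDiff ℝ n F)
    {CF h : ℝ} (hCF : 0 ≤ CF) (hh : 0 ≤ h) {x : ℝ × ℝ}
    (hdfb : ∀ j : ℕ, ‖iteratedFDeriv ℝ j (fderiv ℝ F) x‖ ≤ CF * h ^ (j + 1)) (i : ℕ) :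
    ‖iteratedFDeriv ℝ i (jacDet F) x‖ ≤ 2 * CF ^ 2 * 2 ^ i * h ^ (i + 2) := by
  have hdf : ContDiff ℝ ⊤ (fderiv ℝ F) := (hF ⊤).fderiv_right le_top
  have hu : ∀ (v : ℝ × ℝ) (b : Bool), ContDiff ℝ ⊤ (fun y => eC v b (fderiv ℝ F y)) :=
    fun v b => (eC v b).contDiff.comp hdf
  have hprod : ∀ (v w : ℝ × ℝ), ‖v‖ ≤ 1 → ‖w‖ ≤ 1 → ∀ (b c : Bool),
      ‖iteratedFDeriv ℝ i (fun y => eC v b (fderiv ℝ F y) * eC w c (fderiv ℝ F y)) x‖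
        ≤ CF ^ 2 * 2 ^ i * h ^ (i + 2) := by
    intro v w hv hw b c
    calc ‖iteratedFDeriv ℝ i (fun y => eC v b (fderiv ℝ F y) * eC w c (fderiv ℝ F y)) x‖
        ≤ ∑ j ∈ Finset.range (i + 1), (i.choose j : ℝ)
            * ‖iteratedFDeriv ℝ j (fun y => eC v b (fderiv ℝ F y)) x‖
            * ‖iteratedFDeriv ℝ (i - j) (fun y => eC w c (fderiv ℝ F y)) x‖ :=
          norm_iteratedFDeriv_mul_le (hu v b) (hu w c) x le_top
      _ ≤ ∑ j ∈ Finset.range (i + 1), (i.choose j : ℝ)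
            * (CF * h ^ (j + 1)) * (CF * h ^ (i - j + 1)) := by
          refine Finset.sum_le_sum fun j hj => ?_
          have b1 := (comp_eC_bound v hv b hdf j x).trans (hdfb j)
          have b2 := (comp_eC_bound w hw c hdf (i - j) x).trans (hdfb (i - j))
          gcongr
      _ = ∑ j ∈ Finset.range (i + 1), (i.choose j : ℝ) * (CF ^ 2 * h ^ (i + 2)) := by
          refine Finset.sum_congr rfl fun j hj => ?_
          have hji : j ≤ i := Nat.lt_succ_iff.mp (Finset.mem_range.mp hj)
          have : (j + 1) + (i - j + 1) = i + 2 := by omega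
          rw [mul_assoc, mul_assoc]
          congr 1
          rw [← mul_assoc, mul_mul_mul_comm, ← pow_add, this, ← sq]
      _ = (2 ^ i : ℝ) * (CF ^ 2 * h ^ (i + 2)) := by
          rw [← Finset.sum_mul]
          congr 1
          rw [← Nat.cast_sum, Nat.sum_range_choose]
          push_cast; ring
      _ = CF ^ 2 * 2 ^ i * h ^ (i + 2) := by ring
  rw [jacDet_eq]
  have hsub : (fun y =>
      eC (1, 0) true (fderiv ℝ F y) * eC (0, 1) false (fderiv ℝ F y)
        - eC (1, 0) false (fderiv ℝ F y) * eC (0, 1) true (fderiv ℝ F y))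
    = (fun y => eC (1, 0) true (fderiv ℝ F y) * eC (0, 1) false (fderiv ℝ F y))
      + (fun y => -(eC (1, 0) false (fderiv ℝ F y) * eC (0, 1) true (fderiv ℝ F y))) := by
    funext y; simp [sub_eq_add_neg]
  rw [hsub, iteratedFDeriv_add_apply (((hu _ _).mul (hu _ _)).of_le le_top).contDiffAt
    ((((hu _ _).mul (hu _ _)).neg).of_le le_top).contDiffAt]
  have hn : iteratedFDeriv ℝ i (fun y =>
      -(eC (1, 0) false (fderiv ℝ F y) * eC (0, 1) true (fderiv ℝ F y))) x
    = -iteratedFDeriv ℝ i (fun y =>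
      eC (1, 0) false (fderiv ℝ F y) * eC (0, 1) true (fderiv ℝ F y)) x :=
    iteratedFDeriv_neg_apply
  calc ‖_ + _‖ ≤ ‖_‖ + ‖_‖ := norm_add_le _ _
    _ ≤ CF ^ 2 * 2 ^ i * h ^ (i + 2) + CF ^ 2 * 2 ^ i * h ^ (i + 2) := by
        rw [hn, norm_neg]
        exact add_le_add (hprod _ _ norm_v10 norm_v01 true false)
          (hprod _ _ norm_v10 norm_v01 false true)
    _ = 2 * CF ^ 2 * 2 ^ i * h ^ (i + 2) := by ring

theorem contDiff_jacDet {F : ℝ × ℝ → ℝ × ℝ} (hF : ∀ n : WithTop ℕ∞, ContDiff ℝ n F) :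
    ContDiff ℝ ⊤ (jacDet F) := by
  rw [jacDet_eq]
  have hdf : ContDiff ℝ ⊤ (fderiv ℝ F) := (hF ⊤).fderiv_right le_top
  have hu : ∀ (v : ℝ × ℝ) (b : Bool), ContDiff ℝ ⊤ (fun y => eC v b (fderiv ℝ F y)) :=
    fun v b => (eC v b).contDiff.comp hdf
  exact ((hu _ _).mul (hu _ _)).sub ((hu _ _).mul (hu _ _))

theorem abs_prod_neg (j : ℕ) :
    |∏ i ∈ Finset.range j, (-1 - (i : ℝ))| = (j.factorial : ℝ) := by
  induction j with
  | zero => simp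
  | succ j ih =>
    rw [Finset.prod_range_succ, abs_mul, ih, Nat.factorial_succ]
    rw [abs_of_nonpos (by linarith [(Nat.cast_nonneg j : (0:ℝ) ≤ j)])]
    push_cast
    ring

theorem inv_iterated_bound {y K : ℝ} (hy : 0 < y) (hK : 1 ≤ K) (hyK : y⁻¹ ≤ K)
    (j n : ℕ) (hj : j ≤ n) :
    ‖iteratedFDeriv ℝ j (Inv.inv : ℝ → ℝ) y‖ ≤ (n.factorial : ℝ) * K ^ (n + 1) := by
  rw [norm_iteratedFDeriv_eq_norm_iteratedDeriv, iteratedDeriv_eq_iterate, iter_deriv_inv]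
  rw [Real.norm_eq_abs, abs_mul, abs_mul, abs_pow, abs_neg, abs_one, one_pow, one_mul, Nat.abs_cast]
  have h2 : |y ^ (-1 - (j : ℤ))| ≤ K ^ (j + 1) := by
    have he : y ^ (-1 - (j : ℤ)) = (y⁻¹) ^ (j + 1) := by
      rw [show (-1 - (j : ℤ)) = -((j : ℤ) + 1) by ring, zpow_neg, ← inv_zpow]
      norm_cast
    rw [he, abs_of_nonneg (by positivity)]
    exact pow_le_pow_left₀ (by positivity) hyK _
  calc (j.factorial : ℝ) * |y ^ (-1 - (j : ℤ))|
      ≤ (j.factorial : ℝ) * K ^ (j + 1) := by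
        gcongr
    _ ≤ (n.factorial : ℝ) * K ^ (n + 1) := by
        have h3 : (j.factorial : ℝ) ≤ (n.factorial : ℝ) := by
          exact_mod_cast Nat.factorial_le hj
        have h4 : K ^ (j + 1) ≤ K ^ (n + 1) := pow_le_pow_right₀ hK (by omega)
        have : (0:ℝ) ≤ K ^ (j+1) := by positivity
        exact mul_le_mul h3 h4 (by positivity) (Nat.cast_nonneg _)


end Aux

/-- Bound `|A|_{W^{m,∞}(T̂)} ≤ C h^{m-1}` for the Piola matrix `A = DF / det DF`. -/
theorem stmt0 (k m : ℕ) (hk : 2 ≤ k) (CF c₁ c₂ : ℝ)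
    (hCF : 0 < CF) (hc₁ : 0 < c₁) (hc₂ : 0 < c₂) :
    ∃ C : ℝ, 0 < C ∧ ∀ h : ℝ, h ∈ Set.Ioc (0 : ℝ) 1 → ∀ F : ℝ × ℝ → ℝ × ℝ,
      IsPolyMap k F → Set.InjOn F (closure Tref) →
      (∀ r : ℕ, r ≤ k → ∀ x ∈ Tref, ‖iteratedFDeriv ℝ r F x‖ ≤ CF * h ^ r) →
      (∀ x ∈ closure Tref, c₁ * h ^ 2 ≤ jacDet F x ∧ jacDet F x ≤ c₂ * h ^ 2) →
      ∀ x ∈ Tref, ‖iteratedFDeriv ℝ m (Amap F) x‖ ≤ C * h ^ ((m : ℤ) - 1) := by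
  set K : ℝ := max 1 c₁⁻¹ with hKdef
  set M : ℝ := max 1 (2 * CF ^ 2 * 2 ^ m) with hMdef
  have hK1 : 1 ≤ K := le_max_left _ _
  have hM1 : 1 ≤ M := le_max_left _ _
  have hK0 : 0 < K := lt_of_lt_of_le one_pos hK1
  have hM0 : 0 < M := lt_of_lt_of_le one_pos hM1
  set Ci : ℝ := (m.factorial : ℝ) * K ^ (m + 1) with hCidef
  have hCi0 : 0 < Ci := by
    rw [hCidef]
    have : (0:ℝ) < (m.factorial : ℝ) := by exact_mod_cast m.factorial_pos
    positivity
  set S : ℝ := ∑ i ∈ Finset.range (m + 1),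
      (m.choose i : ℝ) * ((i.factorial : ℝ) * Ci * M ^ i) * CF with hSdef
  have hS0 : 0 ≤ S := Finset.sum_nonneg fun i _ => by positivity
  refine ⟨S + 1, by linarith, ?_⟩
  rintro h ⟨hh0, hh1⟩ F hpoly hinj hFb hdet x hx
  have hh2 : (0:ℝ) < h ^ 2 := by positivity
  have hne : (h:ℝ) ≠ 0 := ne_of_gt hh0
  have hsU : UniqueDiffOn ℝ Tref := isOpen_Tref.uniqueDiffOn
  have hFsm : ∀ n : WithTop ℕ∞, ContDiff ℝ n F := hpoly.contDiff
  have hFd : ∀ r : ℕ, ∀ x' ∈ Tref, ‖iteratedFDeriv ℝ r F x'‖ ≤ CF * h ^ r := by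
    intro r x' hx'
    rcases le_or_gt r k with hr | hr
    · exact hFb r hr x' hx'
    · rw [hpoly.iteratedFDeriv_zero hr x', norm_zero]
      positivity
  have hdF : ∀ j : ℕ, ∀ x' ∈ Tref,
      ‖iteratedFDeriv ℝ j (fderiv ℝ F) x'‖ ≤ CF * h ^ (j + 1) := by
    intro j x' hx'
    rw [norm_iteratedFDeriv_fderiv]
    exact hFd (j + 1) x' hx'
  have hgb : ∀ i : ℕ, ∀ x' ∈ Tref,
      ‖iteratedFDeriv ℝ i (jacDet F) x'‖ ≤ 2 * CF ^ 2 * 2 ^ i * h ^ (i + 2) :=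
    fun i x' hx' => jacDet_bound hFsm hCF.le hh0.le (fun j => hdF j x' hx') i
  have hjac_pos : ∀ x' ∈ Tref, 0 < jacDet F x' := fun x' hx' =>
    lt_of_lt_of_le (by positivity) (hdet x' (subset_closure hx')).1
  have hjsm : ContDiff ℝ ⊤ (jacDet F) := contDiff_jacDet hFsm
  set gj : (ℝ × ℝ) → ℝ := fun y => (h ^ 2)⁻¹ * jacDet F y with hgjdef
  have hgj_c₁ : ∀ x' ∈ Tref, c₁ ≤ gj x' := by
    intro x' hx'
    have h1 := (hdet x' (subset_closure hx')).1
    calc c₁ = (h ^ 2)⁻¹ * (c₁ * h ^ 2) := by field_simp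
      _ ≤ (h ^ 2)⁻¹ * jacDet F x' := by gcongr
  have hgj_pos : ∀ x' ∈ Tref, 0 < gj x' := fun x' hx' => lt_of_lt_of_le hc₁ (hgj_c₁ x' hx')
  have hgjsm : ContDiff ℝ ⊤ gj := contDiff_const.mul hjsm
  set u : (ℝ × ℝ) → ℝ := fun y => (jacDet F y)⁻¹ with hudef
  have hu_cd : ContDiffOn ℝ ⊤ u Tref :=
    hjsm.contDiffOn.inv fun x' hx' => (hjac_pos x' hx').ne'
  have hub : ∀ i, i ≤ m → ‖iteratedFDerivWithin ℝ i u Tref x‖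
      ≤ (i.factorial : ℝ) * Ci * M ^ i * (h ^ i * (h ^ 2)⁻¹) := by
    intro i him
    have hrepr : u = (h ^ 2)⁻¹ • (Inv.inv ∘ gj) := by
      funext y
      simp only [hudef, Pi.smul_apply, Function.comp_apply, smul_eq_mul, hgjdef]
      rw [mul_inv, inv_inv]
      field_simp
    have hcomp_cd : ContDiffOn ℝ ⊤ (Inv.inv ∘ gj) Tref :=
      hgjsm.contDiffOn.inv fun y hy => (hgj_pos y hy).ne'
    rw [hrepr, iteratedFDerivWithin_const_smul_apply (hcomp_cd.of_le le_top x hx) hsU hx,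
      norm_smul ((h ^ 2)⁻¹) (iteratedFDerivWithin ℝ i (Inv.inv ∘ gj) Tref x)]
    have hcb : ‖iteratedFDerivWithin ℝ i (Inv.inv ∘ gj) Tref x‖
        ≤ (i.factorial : ℝ) * Ci * (M * h) ^ i := by
      refine norm_iteratedFDerivWithin_comp_le
        (contDiffOn_inv (𝕜 := ℝ) (n := (⊤ : WithTop ℕ∞)))
        hgjsm.contDiffOn le_top isOpen_compl_singleton.uniqueDiffOn hsU
        (fun y hy => Set.mem_compl_singleton_iff.mpr (hgj_pos y hy).ne') hx
        (C := Ci) (D := M * h) ?_ ?_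
      · intro j hj
        rw [iteratedFDerivWithin_of_isOpen j isOpen_compl_singleton
          (Set.mem_compl_singleton_iff.mpr (hgj_pos x hx).ne')]
        refine inv_iterated_bound (hgj_pos x hx) hK1 ?_ j m (hj.trans him)
        calc (gj x)⁻¹ ≤ c₁⁻¹ := inv_anti₀ hc₁ (hgj_c₁ x hx)
          _ ≤ K := le_max_right _ _
      · intro j hj1 hji
        rw [iteratedFDerivWithin_of_isOpen j isOpen_Tref hx]
        have hgjs : gj = (h ^ 2)⁻¹ • jacDet F := by
          funext y; simp [hgjdef]
        rw [hgjs, iteratedFDeriv_const_smul_apply (hjsm.of_le le_top).contDiffAt,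
          norm_smul ((h ^ 2)⁻¹) (iteratedFDeriv ℝ j (jacDet F) x)]
        have hb := hgb j x hx
        have hA : 2 * CF ^ 2 * 2 ^ j ≤ M ^ j := by
          have h1 : (2:ℝ) * CF ^ 2 * 2 ^ j ≤ 2 * CF ^ 2 * 2 ^ m := by
            gcongr
            · norm_num
            · exact hji.trans him
          have h2 : (2:ℝ) * CF ^ 2 * 2 ^ m ≤ M := le_max_right _ _
          have h3 : M ≤ M ^ j := le_self_pow₀ hM1 (by omega)
          linarith
        calc ‖(h ^ 2)⁻¹‖ * ‖iteratedFDeriv ℝ j (jacDet F) x‖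
            ≤ (h ^ 2)⁻¹ * (2 * CF ^ 2 * 2 ^ j * h ^ (j + 2)) := by
              rw [Real.norm_eq_abs, abs_of_pos (by positivity)]
              gcongr
          _ = (2 * CF ^ 2 * 2 ^ j) * h ^ j := by
              rw [pow_add]
              field_simp
          _ ≤ M ^ j * h ^ j := by gcongr
          _ = (M * h) ^ j := (mul_pow _ _ _).symm
    calc ‖(h ^ 2)⁻¹‖ * ‖iteratedFDerivWithin ℝ i (Inv.inv ∘ gj) Tref x‖
        ≤ (h ^ 2)⁻¹ * ((i.factorial : ℝ) * Ci * (M * h) ^ i) := by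
          rw [Real.norm_eq_abs, abs_of_pos (by positivity)]
          gcongr
      _ = (i.factorial : ℝ) * Ci * M ^ i * (h ^ i * (h ^ 2)⁻¹) := by
          rw [mul_pow]; ring
  have hdFW : ∀ j : ℕ, ‖iteratedFDerivWithin ℝ j (fderiv ℝ F) Tref x‖ ≤ CF * h ^ (j + 1) := by
    intro j
    rw [iteratedFDerivWithin_of_isOpen j isOpen_Tref hx]
    exact hdF j x hx
  have hzp : h ^ ((m:ℤ) - 1) = h ^ (m + 1) * (h ^ 2)⁻¹ := by
    rw [show (m:ℤ) - 1 = ((m + 1 : ℕ) : ℤ) - ((2:ℕ) : ℤ) by push_cast; ring,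
      zpow_sub₀ hne, zpow_natCast, zpow_natCast, div_eq_mul_inv]
  rw [← iteratedFDerivWithin_of_isOpen m isOpen_Tref hx]
  have hAe : Amap F = fun y => u y • fderiv ℝ F y := rfl
  rw [hAe]
  calc ‖iteratedFDerivWithin ℝ m (fun y => u y • fderiv ℝ F y) Tref x‖
      ≤ ∑ i ∈ Finset.range (m + 1), (m.choose i : ℝ)
          * ‖iteratedFDerivWithin ℝ i u Tref x‖
          * ‖iteratedFDerivWithin ℝ (m - i) (fderiv ℝ F) Tref x‖ :=
        norm_iteratedFDerivWithin_smul_le hu_cd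
          ((hFsm ⊤).fderiv_right le_top).contDiffOn hsU hx le_top
    _ ≤ ∑ i ∈ Finset.range (m + 1), (m.choose i : ℝ)
          * ((i.factorial : ℝ) * Ci * M ^ i * (h ^ i * (h ^ 2)⁻¹))
          * (CF * h ^ (m - i + 1)) := by
        refine Finset.sum_le_sum fun i hi => ?_
        have him : i ≤ m := Nat.lt_succ_iff.mp (Finset.mem_range.mp hi)
        have b1 := hub i him
        have b2 := hdFW (m - i)
        gcongr
    _ = S * (h ^ (m + 1) * (h ^ 2)⁻¹) := by
        rw [hSdef, Finset.sum_mul]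
        refine Finset.sum_congr rfl fun i hi => ?_
        have him : i ≤ m := Nat.lt_succ_iff.mp (Finset.mem_range.mp hi)
        have hpow : h ^ i * h ^ (m - i + 1) = h ^ (m + 1) := by
          rw [← pow_add]
          congr 1
          omega
        rw [← hpow]
        ring
    _ ≤ (S + 1) * h ^ ((m:ℤ) - 1) := by
        rw [hzp]
        have hX : (0:ℝ) ≤ h ^ (m + 1) * (h ^ 2)⁻¹ := by positivity
        nlinarith
end
end

section
/- Let U ⊂ ℝ² be open and let F : U → ℝ² be a twice continuously differentiable map that is injective and satisfies det DF(x̂) ≠ 0 for every x̂ ∈ U, and let v̂ : U → ℝ² be continuously differentiable. Define v on V := F(U) by v(F(x̂)) = DF(x̂) v̂(x̂) / det DF(x̂) for x̂ ∈ U. Then v is differentiable on V and for every x̂ ∈ U one has (div v)(F(x̂)) = (div v̂)(x̂) / det DF(x̂), where for a vector field w = (w₁, w₂) one writes div w := ∂w₁/∂x₁ + ∂w₂/∂x₂. -/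
open Set MeasureTheory Function

noncomputable section

lemma aux_clm2 {E : Type*} [NormedAddCommGroup E] [NormedSpace ℝ E]
    (T : (ℝ × ℝ) →L[ℝ] E) (c d : ℝ) :
    T (c, d) = c • T (1, 0) + d • T (0, 1) := by
  have h : ((c, d) : ℝ × ℝ) = c • ((1 : ℝ), (0 : ℝ)) + d • ((0 : ℝ), (1 : ℝ)) := by
    simp [Prod.ext_iff]
  rw [h, map_add, _root_.map_smul, _root_.map_smul]

lemma aux_det2 (L : (ℝ × ℝ) →L[ℝ] (ℝ × ℝ)) :
    LinearMap.det (L : (ℝ × ℝ) →ₗ[ℝ] (ℝ × ℝ)) =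
      (L (1, 0)).1 * (L (0, 1)).2 - (L (0, 1)).1 * (L (1, 0)).2 := by
  rw [← LinearMap.det_toMatrix (Module.Basis.finTwoProd ℝ), Matrix.det_fin_two]
  simp [LinearMap.toMatrix_apply, Module.Basis.coe_finTwoProd_repr, Module.Basis.finTwoProd_zero,
    Module.Basis.finTwoProd_one]

set_option maxHeartbeats 2000000 in
/-- The Piola transform is divergence-preserving up to the Jacobian factor:
if `v(F(x̂)) = DF(x̂)v̂(x̂)/det DF(x̂)` on an open set `U`, then `v` is differentiable
on `F(U)` and `(div v)(F(x̂)) = (div v̂)(x̂) / det DF(x̂)`. -/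
theorem stmt7 (U : Set (ℝ × ℝ)) (hU : IsOpen U) (F : ℝ × ℝ → ℝ × ℝ)
    (hF : ContDiffOn ℝ 2 F U) (hinj : Set.InjOn F U)
    (hdet : ∀ x ∈ U, jacDet F x ≠ 0)
    (vhat : ℝ × ℝ → ℝ × ℝ) (hvhat : ContDiffOn ℝ 1 vhat U)
    (v : ℝ × ℝ → ℝ × ℝ)
    (hrel : ∀ x ∈ U, v (F x) = (jacDet F x)⁻¹ • fderiv ℝ F x (vhat x)) :
    (∀ y ∈ F '' U, DifferentiableAt ℝ v y) ∧
    ∀ x ∈ U, pdiv v (F x) = pdiv vhat x / jacDet F x := by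
  have key : ∀ x₀ ∈ U, DifferentiableAt ℝ v (F x₀) ∧
      pdiv v (F x₀) = pdiv vhat x₀ / jacDet F x₀ := by
    intro x₀ hx₀
    have hUx : U ∈ nhds x₀ := hU.mem_nhds hx₀
    have hFx : ContDiffAt ℝ 2 F x₀ := hF.contDiffAt hUx
    have hvx : ContDiffAt ℝ 1 vhat x₀ := hvhat.contDiffAt hUx
    have hDF1 : ContDiffAt ℝ 1 (fderiv ℝ F) x₀ := hFx.fderiv_right (by norm_num)
    have hA : HasFDerivAt (fderiv ℝ F) (fderiv ℝ (fderiv ℝ F) x₀) x₀ :=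
      (hDF1.differentiableAt (by norm_num)).hasFDerivAt
    have hvd : HasFDerivAt vhat (fderiv ℝ vhat x₀) x₀ :=
      (hvx.differentiableAt (by norm_num)).hasFDerivAt
    set L := fderiv ℝ F x₀ with hLdef
    set H := fderiv ℝ (fderiv ℝ F) x₀ with hHdef
    set Dv := fderiv ℝ vhat x₀ with hDvdef
    set Jf : ℝ × ℝ → ℝ := fun x =>
      (fderiv ℝ F x (1, 0)).1 * (fderiv ℝ F x (0, 1)).2 -
      (fderiv ℝ F x (0, 1)).1 * (fderiv ℝ F x (1, 0)).2 with hJfdef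
    have hJac : ∀ x, jacDet F x = Jf x := fun x => aux_det2 _
    have hJ0 : Jf x₀ ≠ 0 := by rw [← hJac]; exact hdet x₀ hx₀
    -- derivative of Jf
    have hA10 := hA.clm_apply (hasFDerivAt_const ((1:ℝ), (0:ℝ)) x₀)
    have hA01 := hA.clm_apply (hasFDerivAt_const ((0:ℝ), (1:ℝ)) x₀)
    -- the map w
    set w : ℝ × ℝ → ℝ × ℝ := fun x => (Jf x)⁻¹ • fderiv ℝ F x (vhat x) with hwdef
    have hm : HasFDerivAt (fun x => fderiv ℝ F x (vhat x)) (L.comp Dv + H.flip (vhat x₀)) x₀ :=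
      hA.clm_apply hvd
    have hJf' := (hA10.fst.mul hA01.snd).sub (hA01.fst.mul hA10.snd)
    have hJinv : HasFDerivAt (fun x => (Jf x)⁻¹) _ x₀ :=
      (hasFDerivAt_inv hJ0).comp x₀ hJf'
    have hw : HasFDerivAt w _ x₀ := hJinv.smul hm
    -- local inverse
    have hdet' : (fderiv ℝ F x₀).det ≠ 0 := hdet x₀ hx₀
    set e := L.toContinuousLinearEquivOfDetNeZero hdet' with hedef
    have hecoe : (e : (ℝ × ℝ) →L[ℝ] (ℝ × ℝ)) = L :=
      L.coe_toContinuousLinearEquivOfDetNeZero hdet'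
    have hstrict : HasStrictFDerivAt F (e : (ℝ × ℝ) →L[ℝ] ℝ × ℝ) x₀ := by
      rw [hecoe]; exact hFx.hasStrictFDerivAt (by norm_num)
    set g := hstrict.localInverse F e x₀ with hgdef
    have hg : HasFDerivAt g (e.symm : (ℝ × ℝ) →L[ℝ] ℝ × ℝ) (F x₀) :=
      hstrict.to_localInverse.hasFDerivAt
    have hgx : g (F x₀) = x₀ := hstrict.localInverse_apply_image
    have hEv : v =ᶠ[nhds (F x₀)] fun y => w (g y) := by
      have h1 := hstrict.eventually_right_inverse
      have h2 : g ⁻¹' U ∈ nhds (F x₀) :=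
        hstrict.localInverse_continuousAt.preimage_mem_nhds (by
          show U ∈ nhds (g (F x₀))
          rw [hgx]; exact hUx)
      filter_upwards [h1, h2] with y hy1 hy2
      have := hrel _ hy2
      rw [hJac] at this
      calc v y = v (F (g y)) := by rw [hy1]
        _ = w (g y) := this
    have hwg : DifferentiableAt ℝ w (g (F x₀)) := by rw [hgx]; exact hw.differentiableAt
    have hvdiff : DifferentiableAt ℝ v (F x₀) := by
      rw [hEv.differentiableAt_iff]
      exact hwg.comp _ hg.differentiableAt
    refine ⟨hvdiff, ?_⟩
    have hfd : fderiv ℝ v (F x₀) = (fderiv ℝ w x₀).comp (e.symm : (ℝ × ℝ) →L[ℝ] ℝ × ℝ) := by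
      rw [hEv.fderiv_eq, show (fun y => w (g y)) = w ∘ g from rfl,
        fderiv_comp (F x₀) hwg hg.differentiableAt, hgx, hg.fderiv]
    -- scalar components
    obtain ⟨a1, b1, hL10⟩ : ∃ a b, L (1, 0) = (a, b) := ⟨_, _, rfl⟩
    obtain ⟨a2, b2, hL01⟩ : ∃ a b, L (0, 1) = (a, b) := ⟨_, _, rfl⟩
    obtain ⟨p, q, hv⟩ : ∃ a b, vhat x₀ = (a, b) := ⟨_, _, rfl⟩
    obtain ⟨p1, q1, hDv1⟩ : ∃ a b, Dv (1, 0) = (a, b) := ⟨_, _, rfl⟩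
    obtain ⟨p2, q2, hDv2⟩ : ∃ a b, Dv (0, 1) = (a, b) := ⟨_, _, rfl⟩
    obtain ⟨a11, b11, hH11⟩ : ∃ a b, H (1, 0) (1, 0) = (a, b) := ⟨_, _, rfl⟩
    obtain ⟨a12, b12, hH12⟩ : ∃ a b, H (1, 0) (0, 1) = (a, b) := ⟨_, _, rfl⟩
    obtain ⟨a21, b21, hH21⟩ : ∃ a b, H (0, 1) (1, 0) = (a, b) := ⟨_, _, rfl⟩
    obtain ⟨a22, b22, hH22⟩ : ∃ a b, H (0, 1) (0, 1) = (a, b) := ⟨_, _, rfl⟩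
    have hsym : H (1, 0) (0, 1) = H (0, 1) (1, 0) :=
      (hFx.isSymmSndFDerivAt (by simp [minSmoothness_of_isRCLikeNormedField])).eq (1, 0) (0, 1)
    rw [hH12, hH21, Prod.mk.injEq] at hsym
    obtain ⟨hsa, hsb⟩ := hsym
    have hJx : Jf x₀ = a1 * b2 - a2 * b1 := by
      simp only [hJfdef, ← hLdef, hL10, hL01]
    rw [hJx] at hJ0
    have hLpair : ∀ c d : ℝ, L (c, d) = (c * a1 + d * a2, c * b1 + d * b2) := by
      intro c d
      rw [aux_clm2 L c d, hL10, hL01, Prod.smul_mk, Prod.smul_mk, Prod.mk_add_mk]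
      simp [mul_comm]
    have hs1 : e.symm (1, 0) = (Jf x₀)⁻¹ • ((b2 : ℝ), -b1) := by
      rw [ContinuousLinearEquiv.symm_apply_eq, _root_.map_smul]
      have he : e ((b2 : ℝ), -b1) = L (b2, -b1) := by rw [← hecoe]; rfl
      have hx1 : L ((b2 : ℝ), -b1) = ((a1 * b2 - a2 * b1 : ℝ), 0) := by
        rw [hLpair, Prod.mk.injEq]; constructor <;> ring
      rw [he, hx1, hJx, Prod.smul_mk, smul_eq_mul, smul_eq_mul,
        inv_mul_cancel₀ hJ0, mul_zero]
    have hs2 : e.symm (0, 1) = (Jf x₀)⁻¹ • ((-a2 : ℝ), a1) := by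
      rw [ContinuousLinearEquiv.symm_apply_eq, _root_.map_smul]
      have he : e ((-a2 : ℝ), a1) = L (-a2, a1) := by rw [← hecoe]; rfl
      have hx1 : L ((-a2 : ℝ), a1) = ((0 : ℝ), (a1 * b2 - a2 * b1 : ℝ)) := by
        rw [hLpair, Prod.mk.injEq]; constructor <;> ring
      rw [he, hx1, hJx, Prod.smul_mk, smul_eq_mul, smul_eq_mul,
        inv_mul_cancel₀ hJ0, mul_zero]
    -- terminating scalar expansion rules
    have hDvc : ∀ c d : ℝ, Dv (c, d) = (c * p1 + d * p2, c * q1 + d * q2) := by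
      intro c d
      rw [aux_clm2 Dv c d, hDv1, hDv2, Prod.smul_mk, Prod.smul_mk, Prod.mk_add_mk]
      simp [mul_comm]
    have hHc : ∀ c d y z : ℝ, (H (c, d)) (y, z) =
        (c * (y * a11 + z * a12) + d * (y * a21 + z * a22),
         c * (y * b11 + z * b12) + d * (y * b21 + z * b22)) := by
      intro c d y z
      rw [aux_clm2 H c d, ContinuousLinearMap.add_apply, ContinuousLinearMap.smul_apply,
        ContinuousLinearMap.smul_apply, aux_clm2 (H (1, 0)) y z, aux_clm2 (H (0, 1)) y z,
        hH11, hH12, hH21, hH22]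
      simp only [Prod.smul_mk, Prod.mk_add_mk, Prod.mk.injEq, smul_eq_mul]
      try constructor
      all_goals ring
    -- final computation
    simp only [pdiv, hfd, hJac, ← hLdef, ← hDvdef]
    rw [hw.fderiv]
    simp only [← hLdef, ← hDvdef, ← hHdef]
    simp only [ContinuousLinearMap.coe_comp', Function.comp_apply,
      ContinuousLinearEquiv.coe_coe, hs1, hs2, _root_.map_smul, map_add, map_neg,
      ContinuousLinearMap.add_apply, ContinuousLinearMap.sub_apply,
      ContinuousLinearMap.smul_apply, ContinuousLinearMap.smulRight_apply,
      ContinuousLinearMap.toSpanSingleton_apply,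
      ContinuousLinearMap.one_apply, ContinuousLinearMap.coe_fst',
      ContinuousLinearMap.coe_snd', ContinuousLinearMap.zero_apply, map_zero,
      ContinuousLinearMap.flip_apply, ContinuousLinearMap.comp_zero, hv,
      hHc, hDvc, hLpair, Prod.smul_mk, Prod.mk_add_mk,
      Prod.fst_add, Prod.snd_add, Prod.smul_fst, Prod.smul_snd, smul_eq_mul, hJx,
      Prod.fst_zero, Prod.snd_zero, zero_add, add_zero, mul_zero, zero_mul,
      one_mul, mul_one, neg_neg]
    subst hsa hsb
    field_simp
    ring
  constructor
  · rintro y ⟨x, hx, rfl⟩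
    exact (key x hx).1
  · intro x hx
    exact (key x hx).2
end
end

section
/- Let n ≥ 2 be an even integer and let a < b be reals, and set x_i := a + i(b−a)/n for i = 0, 1, …, n. Then there exist weights ω₀, …, ω_n ∈ ℝ such that Σ_{i=0}^{n} ω_i p(x_i) = ∫_a^b p(t) dt for every polynomial p with real coefficients of degree ≤ n+1. -/
open MeasureTheory

/-- Closed Newton–Cotes quadrature with an even number `n` of subintervals gains a degree:
there are weights at the `n+1` equally spaced nodes in `[a,b]` making the rule exact on
all polynomials of degree ≤ n+1. -/
theorem stmt16 (n : ℕ) (hn : 2 ≤ n) (heven : Even n) (a b : ℝ) (hab : a < b) :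
    ∃ ω : Fin (n + 1) → ℝ, ∀ p : Polynomial ℝ, p.natDegree ≤ n + 1 →
      ∑ i, ω i * p.eval (a + (i : ℕ) * (b - a) / n) = ∫ t in a..b, p.eval t := by
  classical
  have hn0 : (n : ℝ) ≠ 0 := by
    exact Nat.cast_ne_zero.mpr (by omega)
  have hba : b - a ≠ 0 := sub_ne_zero.mpr hab.ne'
  set v : Fin (n + 1) → ℝ := fun i => a + (i : ℕ) * (b - a) / n with hv
  have hinj : Set.InjOn v (Finset.univ : Finset (Fin (n + 1))) := by
    intro i _ j _ h
    simp only [hv] at h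
    have h2 : (i : ℕ) * (b - a) / n = (j : ℕ) * (b - a) / n := by linarith
    have h3 : ((i : ℕ) : ℝ) = ((j : ℕ) : ℝ) := by
      field_simp at h2
      exact_mod_cast h2
    exact Fin.ext (by exact_mod_cast h3)
  set ω0 : Fin (n + 1) → ℝ :=
    fun i => ∫ t in a..b, (Lagrange.basis Finset.univ v i).eval t with hω0
  -- exactness of Lagrange weights on degree ≤ n
  have step1 : ∀ p : Polynomial ℝ, p.natDegree ≤ n →
      ∑ i, ω0 i * p.eval (v i) = ∫ t in a..b, p.eval t := by
    intro p hp
    have hdeg : p.degree < ((Finset.univ : Finset (Fin (n + 1))).card : WithBot ℕ) := by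
      rw [Finset.card_univ, Fintype.card_fin]
      exact lt_of_le_of_lt Polynomial.degree_le_natDegree
        (by exact_mod_cast Nat.lt_succ_of_le hp)
    conv_rhs => rw [Lagrange.eq_interpolate hinj hdeg]
    rw [Lagrange.interpolate_apply]
    have : ∀ t : ℝ, (∑ i, Polynomial.C (p.eval (v i)) * Lagrange.basis Finset.univ v i).eval t
        = ∑ i, p.eval (v i) * (Lagrange.basis Finset.univ v i).eval t := by
      intro t; rw [Polynomial.eval_finset_sum]; simp
    rw [intervalIntegral.integral_congr (fun t _ => this t)]
    rw [intervalIntegral.integral_finset_sum (fun i (_ : i ∈ Finset.univ) =>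
      (show IntervalIntegrable (fun t => p.eval (v i) * (Lagrange.basis Finset.univ v i).eval t)
        volume a b from (continuous_const.mul
        (Lagrange.basis Finset.univ v i).continuous).intervalIntegrable a b))]
    refine Finset.sum_congr rfl fun i _ => ?_
    rw [hω0, mul_comm]
    rw [← intervalIntegral.integral_const_mul]
  -- reflection of nodes
  have hrev : ∀ i : Fin (n + 1), v i.rev = a + b - v i := by
    intro i
    have hi : (i : ℕ) ≤ n := Nat.lt_succ_iff.mp i.isLt
    simp only [hv, Fin.val_rev]
    have : ((n + 1 - ((i : ℕ) + 1) : ℕ) : ℝ) = (n : ℝ) - (i : ℕ) := by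
      push_cast [Nat.succ_sub_succ, Nat.cast_sub hi]; ring
    rw [this]
    field_simp
    ring
  -- reflected weights also exact on degree ≤ n
  have step2 : ∀ p : Polynomial ℝ, p.natDegree ≤ n →
      ∑ i, ω0 i.rev * p.eval (v i) = ∫ t in a..b, p.eval t := by
    intro p hp
    set q : Polynomial ℝ := p.comp (Polynomial.C (a + b) - Polynomial.X) with hq
    have hqdeg : q.natDegree ≤ n := by
      rw [hq, Polynomial.natDegree_comp]
      have : (Polynomial.C (a + b) - Polynomial.X).natDegree = 1 := by
        rw [show Polynomial.C (a + b) - Polynomial.X = -(Polynomial.X - Polynomial.C (a + b)) by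
          ring, Polynomial.natDegree_neg, Polynomial.natDegree_X_sub_C]
      rw [this, mul_one]; exact hp
    have hqe : ∀ x : ℝ, q.eval x = p.eval (a + b - x) := by
      intro x; simp [hq, Polynomial.eval_comp]
    have reindex : ∑ i, ω0 i.rev * p.eval (v i) = ∑ i, ω0 i * q.eval (v i) := by
      refine Fintype.sum_bijective Fin.rev Fin.rev_bijective _ _ fun i => ?_
      rw [hqe, hrev]
      have h4 : a + b - (a + b - v i) = v i := by ring
      rw [h4]
    rw [reindex, step1 q hqdeg]
    have : ∀ t ∈ Set.uIcc a b, q.eval t = p.eval (a + b - t) := fun t _ => hqe t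
    rw [intervalIntegral.integral_congr this,
      intervalIntegral.integral_comp_sub_left (fun t => p.eval t) (a + b)]
    congr 1 <;> ring
  set ω : Fin (n + 1) → ℝ := fun i => (ω0 i + ω0 i.rev) / 2 with hω
  have ωsym : ∀ i, ω i.rev = ω i := by
    intro i; simp [hω, Fin.rev_rev, add_comm]
  have step3 : ∀ p : Polynomial ℝ, p.natDegree ≤ n →
      ∑ i, ω i * p.eval (v i) = ∫ t in a..b, p.eval t := by
    intro p hp
    have : ∑ i, ω i * p.eval (v i)
        = ((∑ i, ω0 i * p.eval (v i)) + ∑ i, ω0 i.rev * p.eval (v i)) / 2 := by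
      rw [← Finset.sum_add_distrib]
      simp only [hω]
      rw [Finset.sum_div]
      exact Finset.sum_congr rfl fun i _ => by ring
    rw [this, step1 p hp, step2 p hp]; ring
  set c : ℝ := (a + b) / 2 with hc
  have key : ∑ i, ω i * (v i - c) ^ (n + 1) = 0 := by
    have hrefl : ∑ i, ω i * (v i - c) ^ (n + 1)
        = -∑ i, ω i * (v i - c) ^ (n + 1) := by
      nth_rewrite 1 [show (∑ i, ω i * (v i - c) ^ (n + 1))
        = ∑ i, ω i.rev * (v i.rev - c) ^ (n + 1) from
        (Fintype.sum_bijective Fin.rev Fin.rev_bijective _ _ fun i => by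
          simp [Fin.rev_rev]).symm]
      rw [← Finset.sum_neg_distrib]
      refine Finset.sum_congr rfl fun i _ => ?_
      have h1 : v i.rev - c = -(v i - c) := by rw [hrev]; simp [hc]; ring
      have hodd : Odd (n + 1) := Even.add_one heven
      rw [ωsym, h1, hodd.neg_pow]; ring
    linarith
  have intzero : (∫ t in a..b, (t - c) ^ (n + 1)) = 0 := by
    rw [intervalIntegral.integral_comp_sub_right (fun t => t ^ (n + 1)) c]
    rw [integral_pow]
    have h1 : a - c = -((b - a) / 2) := by rw [hc]; ring
    have h2 : b - c = (b - a) / 2 := by rw [hc]; ring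
    have heven2 : Even (n + 1 + 1) := by
      rcases heven with ⟨k, hk⟩; exact ⟨k + 1, by omega⟩
    rw [h1, h2, heven2.neg_pow, sub_self, zero_div]
  refine ⟨ω, fun p hp => ?_⟩
  set C : ℝ := p.coeff (n + 1) with hC
  set q : Polynomial ℝ :=
    p - Polynomial.C C * (Polynomial.X - Polynomial.C c) ^ (n + 1) with hq
  have hmon : ((Polynomial.X - Polynomial.C c) ^ (n + 1) : Polynomial ℝ).natDegree = n + 1 := by
    rw [Polynomial.natDegree_pow, Polynomial.natDegree_X_sub_C, mul_one]
  have hmonic : ((Polynomial.X - Polynomial.C c) ^ (n + 1) : Polynomial ℝ).Monic :=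
    (Polynomial.monic_X_sub_C c).pow (n + 1)
  have hqdeg : q.natDegree ≤ n := by
    rw [Polynomial.natDegree_le_iff_coeff_eq_zero]
    intro N hN
    rw [hq, Polynomial.coeff_sub, Polynomial.coeff_C_mul]
    rcases eq_or_lt_of_le (Nat.succ_le_of_lt hN) with h | h
    · rw [← h]
      have : ((Polynomial.X - Polynomial.C c) ^ (n + 1) : Polynomial ℝ).coeff (n + 1) = 1 := by
        have := hmonic.coeff_natDegree
        rwa [hmon] at this
      rw [this, ← hC, mul_one, sub_self]
    · rw [Polynomial.coeff_eq_zero_of_natDegree_lt (lt_of_le_of_lt hp h),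
        Polynomial.coeff_eq_zero_of_natDegree_lt (by rw [hmon]; exact h), mul_zero, sub_zero]
  have hpe : ∀ x : ℝ, p.eval x = q.eval x + C * (x - c) ^ (n + 1) := by
    intro x
    simp only [hq, Polynomial.eval_sub, Polynomial.eval_mul, Polynomial.eval_pow,
      Polynomial.eval_C, Polynomial.eval_X]
    ring
  have lhs : ∑ i, ω i * p.eval (v i) = ∫ t in a..b, q.eval t := by
    have : ∑ i, ω i * p.eval (v i)
        = (∑ i, ω i * q.eval (v i)) + C * ∑ i, ω i * (v i - c) ^ (n + 1) := by
      rw [Finset.mul_sum, ← Finset.sum_add_distrib]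
      exact Finset.sum_congr rfl fun i _ => by rw [hpe]; ring
    rw [this, key, mul_zero, add_zero, step3 q hqdeg]
  rw [lhs]
  have hint1 : IntervalIntegrable (fun t => q.eval t) volume a b :=
    q.continuous.intervalIntegrable a b
  have hint2 : IntervalIntegrable (fun t => C * (t - c) ^ (n + 1)) volume a b :=
    (continuous_const.mul ((continuous_id.sub continuous_const).pow _)).intervalIntegrable a b
  calc (∫ t in a..b, q.eval t)
      = (∫ t in a..b, q.eval t) + C * ∫ t in a..b, (t - c) ^ (n + 1) := by
        rw [intzero, mul_zero, add_zero]
    _ = ∫ t in a..b, (q.eval t + C * (t - c) ^ (n + 1)) := by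
        rw [← intervalIntegral.integral_const_mul, intervalIntegral.integral_add hint1 hint2]
    _ = ∫ t in a..b, p.eval t := by
        refine intervalIntegral.integral_congr fun t _ => (hpe t).symm
end
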